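/- Let λ ∈ (0,1). Then the function f : ℝ → ℝ defined by f(c) = exp((c²−1)/c) − c²/(1−λ) has exactly one zero in the open interval (1, ∞); i.e., there exists a unique c ∈ (1, ∞) with f(c) = 0. -/

import Mathlib

open Real

theorem growth_optimal_f_unique_root_theta_eq_half
    (lam : ℝ) (hlam : lam ∈ Set.Ioo (0:ℝ) 1)
    (f : ℝ → ℝ)
    (hf : ∀ c : ℝ, f c = Real.exp ((c^2 - 1)/c) - c^2 / (1 - lam)) :
    ∃! c : ℝ, c ∈ Set.Ioi (1:ℝ) ∧ f c = 0 := by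
  obtain ⟨hl0, hl1⟩ := hlam
  have h1lam : (0:ℝ) < 1 - lam := by linarith
  set L : ℝ := Real.log (1 - lam)⁻¹ with hL
  have hA1 : 1 < (1 - lam)⁻¹ := by
    rw [lt_inv_comm₀ one_pos h1lam]
    simpa using hl0
  have hL0 : 0 < L := Real.log_pos hA1
  set g : ℝ → ℝ := fun c => c - c⁻¹ - 2 * Real.log c with hg
  -- derivative facts
  have hderiv : ∀ c : ℝ, 0 < c → HasDerivAt g ((1 - c⁻¹)^2) c := by
    intro c hc0
    have h1 : HasDerivAt (fun x : ℝ => x) 1 c := hasDerivAt_id c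
    have h2 : HasDerivAt (fun x : ℝ => x⁻¹) (-(c^2)⁻¹) c := hasDerivAt_inv hc0.ne'
    have h3 : HasDerivAt (fun x : ℝ => 2 * Real.log x) (2 * c⁻¹) c :=
      (Real.hasDerivAt_log hc0.ne').const_mul 2
    have : HasDerivAt g _ c := (h1.sub h2).sub h3
    convert this using 1
    ring
  have gcont : ContinuousOn g (Set.Ici (1:ℝ)) := by
    intro c hc
    have hc0 : (0:ℝ) < c := lt_of_lt_of_le one_pos hc
    exact (hderiv c hc0).continuousAt.continuousWithinAt
  have gmono : StrictMonoOn g (Set.Ici (1:ℝ)) := by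
    apply strictMonoOn_of_deriv_pos (convex_Ici 1) gcont
    intro c hc
    rw [interior_Ici] at hc
    have hc1 : (1:ℝ) < c := hc
    have hc0 : (0:ℝ) < c := by linarith
    rw [(hderiv c hc0).deriv]
    have hlt : c⁻¹ < 1 := by
      rw [inv_lt_one_iff₀]; right; exact hc1
    have h0 : 0 < 1 - c⁻¹ := by linarith
    positivity
  -- equivalence between f c = 0 and g c = L on (1, ∞)
  have key : ∀ c : ℝ, 1 < c → (f c = 0 ↔ g c = L) := by
    intro c hc
    have hc0 : (0:ℝ) < c := by linarith
    have hrhs : c^2 / (1 - lam) = Real.exp (2 * Real.log c + L) := by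
      rw [Real.exp_add, hL, Real.exp_log (by positivity)]
      rw [show (2:ℝ) * Real.log c = Real.log (c^2) by
        rw [Real.log_pow]; push_cast; ring]
      rw [Real.exp_log (by positivity)]
      field_simp
    rw [hf, sub_eq_zero, hrhs, Real.exp_eq_exp]
    have hid : (c^2 - 1)/c = c - c⁻¹ := by field_simp
    rw [hid]
    simp only [hg]
    constructor <;> intro h <;> linarith
  -- g 1 = 0
  have hg1 : g (1:ℝ) = 0 := by simp [hg]
  -- existence of a point where g is large
  set c₀ : ℝ := max 2 (2 * L + 6) with hc₀
  have hc₀2 : (2:ℝ) ≤ c₀ := le_max_left _ _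
  have hc₀1 : (1:ℝ) ≤ c₀ := by linarith
  have hc₀0 : (0:ℝ) < c₀ := by linarith
  have hlogbound : Real.log c₀ ≤ c₀ / 4 + 1 := by
    have hexp1 : (2:ℝ) ≤ Real.exp 1 := by
      have := Real.add_one_le_exp (1:ℝ)
      linarith
    have hexp2 : (4:ℝ) ≤ Real.exp 2 := by
      have : Real.exp 2 = Real.exp 1 * Real.exp 1 := by
        rw [← Real.exp_add]; norm_num
      nlinarith [Real.exp_pos (1:ℝ)]
    have h1 : Real.log (c₀ * Real.exp (-2)) ≤ c₀ * Real.exp (-2) - 1 :=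
      Real.log_le_sub_one_of_pos (by positivity)
    rw [Real.log_mul hc₀0.ne' (Real.exp_pos _).ne', Real.log_exp] at h1
    have h2 : c₀ * Real.exp (-2) ≤ c₀ / 4 := by
      rw [Real.exp_neg]
      rw [show c₀ / 4 = c₀ * (4:ℝ)⁻¹ by ring]
      apply mul_le_mul_of_nonneg_left _ hc₀0.le
      exact inv_anti₀ (by norm_num) hexp2
    linarith
  have hgc₀ : L ≤ g c₀ := by
    have hinv : c₀⁻¹ ≤ 1 := by
      rw [inv_le_one_iff₀]; right; linarith
    have h6 : 2 * L + 6 ≤ c₀ := le_max_right _ _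
    simp only [hg]
    nlinarith
  -- IVT
  have hIcc : L ∈ Set.Icc (g 1) (g c₀) := ⟨by rw [hg1]; exact hL0.le, hgc₀⟩
  obtain ⟨c, hcmem, hgc⟩ := intermediate_value_Icc hc₀1 (gcont.mono (by
    intro x hx; exact hx.1)) hIcc
  have hc1 : 1 < c := by
    rcases lt_or_eq_of_le hcmem.1 with h | h
    · exact h
    · exfalso; rw [← h, hg1] at hgc; linarith
  refine ⟨c, ⟨hc1, (key c hc1).2 hgc⟩, ?_⟩
  rintro y ⟨hy1, hfy⟩
  have hy1' : (1:ℝ) < y := hy1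
  have hgy : g y = L := (key y hy1').1 hfy
  exact gmono.injOn (Set.mem_Ici.2 hy1'.le) (Set.mem_Ici.2 hc1.le) (by rw [hgy, hgc])
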